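/- Let h : ℂ → ℂ be holomorphic on the strip S_r = {θ ∈ ℂ : |Im θ| < r}, 2π-periodic (h(θ+2π)=h(θ)), bounded by ‖h‖_r = sup over S_r of |h|, and suppose its average over one period vanishes: ∫₀^{2π} h(t+is) dt = 0 for real t-integration at fixed imaginary part. Then the 2π-periodic antiderivative H of h normalized so that ∫₀^{2π} H(t) dt = 0 satisfies ‖H‖_r ≤ 2π‖h‖_r. -/

import Mathlib

open scoped Real
open Complex
open Set

/-- If `h` is holomorphic on the strip `S_r = {θ : |Im θ| < r}`, `2π`-periodic, bounded by `C`
on the strip, with vanishing average over a period, then the normalized `2π`-periodic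
antiderivative `H` of `h` (with mean zero over a period on the real line) satisfies
`‖H‖_r ≤ 2π C`. -/
theorem norm_antideriv_le (r C : ℝ) (hr : 0 < r) (h H : ℂ → ℂ)
    (hhol : DifferentiableOn ℂ h {θ : ℂ | |θ.im| < r})
    (hper : ∀ θ : ℂ, h (θ + 2 * π) = h θ)
    (hbound : ∀ θ : ℂ, |θ.im| < r → ‖h θ‖ ≤ C)
    (hmean : ∀ s : ℝ, |s| < r → ∫ t in (0:ℝ)..(2 * π), h (t + s * I) = 0)
    (hderiv : ∀ θ : ℂ, |θ.im| < r → HasDerivAt H (h θ) θ)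
    (hHper : ∀ θ : ℂ, H (θ + 2 * π) = H θ)
    (hHmean : ∫ t in (0:ℝ)..(2 * π), H t = 0) :
    ∀ θ : ℂ, |θ.im| < r → ‖H θ‖ ≤ 2 * π * C := by
  intro θ hθ
  set s := θ.im with hs
  set x := θ.re with hx
  have hC : 0 ≤ C := le_trans (norm_nonneg _) (hbound 0 (by simpa using hr))
  -- H differentiable on the strip
  have hHdiff : DifferentiableOn ℂ H {θ : ℂ | |θ.im| < r} :=
    fun z hz => ((hderiv z hz).differentiableAt).differentiableWithinAt
  -- points of the form t + s*I with |s| < r are in the strip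
  have hmem : ∀ t : ℝ, ((t:ℂ) + s*I).im = s := by
    intro t; simp
  -- mean of H over horizontal line at height s vanishes
  have hM : ∫ t in (0:ℝ)..(2*π), H (t + s*I) = 0 := by
    have hrect : Set.uIcc (0:ℂ).re ((2*π:ℝ) + s*I : ℂ).re ×ℂ
        Set.uIcc (0:ℂ).im ((2*π:ℝ) + s*I : ℂ).im ⊆ {θ : ℂ | |θ.im| < r} := by
      intro z hz
      have hzim : z.im ∈ Set.uIcc (0:ℂ).im ((2*π:ℝ) + s*I : ℂ).im := hz.2
      simp only [Complex.zero_im, Complex.add_im, Complex.ofReal_im, Complex.mul_im,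
        Complex.ofReal_re, Complex.I_im, Complex.I_re, mul_one, mul_zero, zero_add,
        add_zero, zero_mul] at hzim
      have : |z.im| ≤ |s| := by
        rcases Set.mem_uIcc.1 hzim with ⟨h1, h2⟩ | ⟨h1, h2⟩ <;>
          exact abs_le.2 ⟨by linarith [neg_abs_le s, le_abs_self s],
            by linarith [neg_abs_le s, le_abs_self s]⟩
      exact lt_of_le_of_lt this hθ
    have key := Complex.integral_boundary_rect_eq_zero_of_differentiableOn H 0
      ((2*π:ℝ) + s*I) (hHdiff.mono hrect)
    simp only [Complex.zero_re, Complex.zero_im, Complex.add_re, Complex.add_im,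
      Complex.ofReal_re, Complex.ofReal_im, Complex.mul_re, Complex.mul_im,
      Complex.I_re, Complex.I_im, mul_zero, mul_one, zero_mul, zero_add, add_zero,
      sub_zero, zero_sub] at key
    -- bottom integral is hHmean after simplifying H (t + 0*I)
    have hbot : ∫ t in (0:ℝ)..(2*π), H ((t:ℂ) + (0:ℝ)*I) = 0 := by
      simpa using hHmean
    -- side integrals cancel by periodicity
    have hside : ∀ y : ℝ, H ((2*π:ℝ) + (y:ℂ)*I) = H ((0:ℝ) + (y:ℂ)*I) := by
      intro y
      have := hHper ((y:ℂ)*I)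
      rw [show ((2*π:ℝ):ℂ) + (y:ℂ)*I = (y:ℂ)*I + 2*π by push_cast; ring, this]
      simp
    simp only [hside, smul_eq_mul] at key
    rw [hbot] at key
    linear_combination -key
  -- openness of the strip
  have hopen : IsOpen {θ : ℂ | |θ.im| < r} :=
    isOpen_lt (continuous_abs.comp Complex.continuous_im) continuous_const
  have hmemS : ∀ t : ℝ, ((t:ℂ) + s*I) ∈ {θ : ℂ | |θ.im| < r} := by
    intro t; simp only [mem_setOf_eq, Complex.add_im, Complex.ofReal_im, Complex.mul_im,
      Complex.ofReal_re, Complex.I_im, Complex.I_re, mul_one, mul_zero, zero_add, add_zero,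
      zero_mul]
    exact hθ
  -- continuity of the horizontal restrictions
  have hline : Continuous fun t : ℝ => (t:ℂ) + s*I := by continuity
  have hcont_h : Continuous fun t : ℝ => h ((t:ℂ) + s*I) := by
    rw [continuous_iff_continuousAt]
    intro t
    exact ContinuousAt.comp
      ((hhol.differentiableAt (hopen.mem_nhds (hmemS t))).continuousAt) hline.continuousAt
  have hcont_H : Continuous fun t : ℝ => H ((t:ℂ) + s*I) := by
    rw [continuous_iff_continuousAt]
    intro t
    exact ContinuousAt.comp ((hderiv _ (hmemS t)).continuousAt) hline.continuousAt
  -- derivative of the horizontal restriction of H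
  have hg : ∀ t : ℝ, HasDerivAt (fun t : ℝ => H ((t:ℂ) + s*I)) (h ((t:ℂ) + s*I)) t := by
    intro t
    have h1 : HasDerivAt (fun z : ℂ => H (z + s*I)) (h ((t:ℂ) + s*I)) (t:ℂ) := by
      have := (hderiv ((t:ℂ) + s*I) (hmemS t)).comp (t:ℂ)
        ((hasDerivAt_id (t:ℂ)).add_const ((s:ℂ)*I))
      simp only [mul_one] at this; exact this
    exact h1.comp_ofReal
  -- FTC on horizontal segments
  have hFTC : ∀ a b : ℝ, ∫ u in a..b, h ((u:ℂ) + s*I) = H ((b:ℂ) + s*I) - H ((a:ℂ) + s*I) := by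
    intro a b
    exact intervalIntegral.integral_eq_sub_of_hasDerivAt (fun u _ => hg u)
      (hcont_h.intervalIntegrable a b)
  have hθeq : θ = (x:ℂ) + s*I := (Complex.re_add_im θ).symm
  -- pointwise bound on H θ - H (t + s*I)
  have hdb : ∀ t ∈ Set.uIoc x (x + 2*π), ‖H θ - H ((t:ℂ) + s*I)‖ ≤ 2*π*C := by
    intro t ht
    have ht' : x ≤ t ∧ t ≤ x + 2*π := by
      rcases Set.mem_uIoc.1 ht with ⟨h1, h2⟩ | ⟨h1, h2⟩
      · exact ⟨le_of_lt h1, h2⟩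
      · constructor <;> nlinarith [Real.pi_pos]
    have : H θ - H ((t:ℂ) + s*I) = ∫ u in t..x, h ((u:ℂ) + s*I) := by
      rw [hFTC t x, ← hθeq]
    rw [this]
    calc ‖∫ u in t..x, h ((u:ℂ) + s*I)‖ ≤ C * |x - t| :=
          intervalIntegral.norm_integral_le_of_norm_le_const
            (fun u _ => hbound _ (hmemS u))
      _ ≤ C * (2*π) := by
          apply mul_le_mul_of_nonneg_left _ hC
          rw [abs_le]; constructor <;> nlinarith [Real.pi_pos]
      _ = 2*π*C := by ring
  -- the horizontal mean over [x, x+2π] also vanishes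
  have hPer : Function.Periodic (fun t : ℝ => H ((t:ℂ) + s*I)) (2*π) := by
    intro t
    have : ((t + 2*π : ℝ) : ℂ) + s*I = ((t:ℂ) + s*I) + 2*π := by push_cast; ring
    simp only [this, hHper]
  have hMx : ∫ t in x..(x + 2*π), H ((t:ℂ) + s*I) = 0 := by
    rw [hPer.intervalIntegral_add_eq x 0]
    simpa using hM
  -- average the constant H θ against the mean-zero horizontal restriction
  have hkey : ∫ t in x..(x + 2*π), (H θ - H ((t:ℂ) + s*I)) = (2*π : ℝ) • H θ := by
    rw [intervalIntegral.integral_sub (intervalIntegrable_const)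
      (hcont_H.intervalIntegrable _ _), hMx, sub_zero, intervalIntegral.integral_const]
    norm_num
  have hnorm : ‖(2*π : ℝ) • H θ‖ ≤ 2*π*C * |x + 2*π - x| := by
    rw [← hkey]
    exact intervalIntegral.norm_integral_le_of_norm_le_const hdb
  rw [norm_smul, Real.norm_eq_abs] at hnorm
  have h2π : (0:ℝ) < 2*π := by positivity
  have : |x + 2*π - x| = 2*π := by rw [abs_of_pos] <;> [ring_nf; linarith]
  rw [this, abs_of_pos h2π] at hnorm
  calc ‖H θ‖ = (2*π * ‖H θ‖) / (2*π) := by field_simp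
    _ ≤ (2*π*C * (2*π)) / (2*π) := by
        exact div_le_div_of_nonneg_right hnorm h2π.le |>.trans_eq rfl
    _ = 2*π*C := by field_simp
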